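/- Sequential composition of differential privacy: if F : T → Dist(U) is (ε₁, δ₁)-differentially private w.r.t. adjacency Φ, and for each u ∈ U, G(·, u) : T → Dist(V) is such that for adjacent inputs t₁ Φ t₂ and every output set E ⊆ V in common, Pr[G(t₁,u) ∈ E] ≤ exp(ε₂)·Pr[G(t₂,u) ∈ E] + δ₂, then the composed mechanism t ↦ bind (F t) (λ u. G(t, u)) is (ε₁ + ε₂, δ₁ + δ₂)-differentially private w.r.t. Φ. -/

import Mathlib

open scoped ENNReal

/-- Probability of an event `E` under a discrete distribution `μ`. -/
noncomputable def Pr {U : Type*} (μ : U → ℝ≥0∞) (E : Set U) : ℝ≥0∞ :=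
  ∑' x, E.indicator μ x

/-- The ε-distance `Δ_ε(μ₁, μ₂)`; ENNReal subtraction is truncated at 0,
implementing the `max(0, ·)` cap. -/
noncomputable def epsDist {U : Type*} (ε : ℝ) (μ₁ μ₂ : U → ℝ≥0∞) : ℝ≥0∞ :=
  ⨆ E : Set U, (Pr μ₁ E - ENNReal.ofReal (Real.exp ε) * Pr μ₂ E)

/-- Monadic bind of discrete distributions. -/
noncomputable def dbind {U V : Type*} (μ : U → ℝ≥0∞) (f : U → V → ℝ≥0∞) : V → ℝ≥0∞ :=
  fun v => ∑' u, μ u * f u v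


lemma Pr_le_tsum {U : Type*} (μ : U → ℝ≥0∞) (E : Set U) : Pr μ E ≤ ∑' u, μ u :=
  ENNReal.tsum_le_tsum (fun u => Set.indicator_le_self E μ u)

lemma Pr_dbind {U V : Type*} (μ : U → ℝ≥0∞) (f : U → V → ℝ≥0∞) (E : Set V) :
    Pr (dbind μ f) E = ∑' u, μ u * Pr (f u) E := by
  unfold Pr dbind
  have h1 : ∀ v : V, E.indicator (fun v => ∑' u, μ u * f u v) v
      = ∑' u, E.indicator (fun v => μ u * f u v) v := by
    intro v
    by_cases h : v ∈ E
    · simp [Set.indicator_of_mem h]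
    · simp [Set.indicator_of_notMem h]
  calc ∑' v, E.indicator (fun v => ∑' u, μ u * f u v) v
      = ∑' v, ∑' u, E.indicator (fun v => μ u * f u v) v := by
        exact tsum_congr h1
    _ = ∑' u, ∑' v, E.indicator (fun v => μ u * f u v) v := ENNReal.tsum_comm
    _ = ∑' u, μ u * ∑' v, E.indicator (f u) v := by
        refine tsum_congr fun u => ?_
        rw [← ENNReal.tsum_mul_left]
        refine tsum_congr fun v => ?_
        by_cases h : v ∈ E
        · simp [Set.indicator_of_mem h]
        · simp [Set.indicator_of_notMem h]

lemma key_exp_dp {U : Type*} (μ₁ μ₂ : U → ℝ≥0∞) (hμ₂ : ∑' u, μ₂ u = 1)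
    (e δ : ℝ≥0∞) (he : e ≠ ∞) (hdp : ∀ E : Set U, Pr μ₁ E ≤ e * Pr μ₂ E + δ)
    (g : U → ℝ≥0∞) (hg : ∀ u, g u ≤ 1) :
    ∑' u, μ₁ u * g u ≤ e * (∑' u, μ₂ u * g u) + δ := by
  set S : Set U := {u | e * μ₂ u < μ₁ u} with hS
  have hpt : ∀ u, μ₁ u * g u ≤ e * (μ₂ u * g u)
      + S.indicator (fun u => μ₁ u - e * μ₂ u) u := by
    intro u
    by_cases h : u ∈ S
    · rw [Set.indicator_of_mem h]
      calc μ₁ u * g u ≤ (e * μ₂ u + (μ₁ u - e * μ₂ u)) * g u := by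
            exact mul_le_mul_left le_add_tsub _
        _ = e * (μ₂ u * g u) + (μ₁ u - e * μ₂ u) * g u := by ring
        _ ≤ e * (μ₂ u * g u) + (μ₁ u - e * μ₂ u) * 1 :=
            add_le_add_right (mul_le_mul_right (hg u) _) _
        _ = e * (μ₂ u * g u) + (μ₁ u - e * μ₂ u) := by rw [mul_one]
    · rw [Set.indicator_of_notMem h, add_zero]
      have hle : μ₁ u ≤ e * μ₂ u := not_lt.mp h
      calc μ₁ u * g u ≤ (e * μ₂ u) * g u := mul_le_mul_left hle _
        _ = e * (μ₂ u * g u) := by ring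
  have hPr2 : Pr μ₂ S ≤ 1 := hμ₂ ▸ Pr_le_tsum μ₂ S
  have hfin : e * Pr μ₂ S ≠ ∞ :=
    ENNReal.mul_ne_top he (lt_of_le_of_lt hPr2 ENNReal.one_lt_top).ne
  have hX : (∑' u, S.indicator (fun u => μ₁ u - e * μ₂ u) u) ≤ δ := by
    have h1 : (∑' u, S.indicator (fun u => μ₁ u - e * μ₂ u) u) + e * Pr μ₂ S
        = Pr μ₁ S := by
      unfold Pr
      rw [← ENNReal.tsum_mul_left, ← ENNReal.tsum_add]
      refine tsum_congr fun u => ?_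
      by_cases h : u ∈ S
      · simp only [Set.indicator_of_mem h]
        exact tsub_add_cancel_of_le (le_of_lt h)
      · simp [Set.indicator_of_notMem h]
    have h2 := hdp S
    rw [← h1, add_comm (e * Pr μ₂ S) δ] at h2
    exact (ENNReal.add_le_add_iff_right hfin).mp h2
  calc ∑' u, μ₁ u * g u
      ≤ ∑' u, (e * (μ₂ u * g u) + S.indicator (fun u => μ₁ u - e * μ₂ u) u) :=
        ENNReal.tsum_le_tsum hpt
    _ = e * (∑' u, μ₂ u * g u) + ∑' u, S.indicator (fun u => μ₁ u - e * μ₂ u) u := by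
        rw [ENNReal.tsum_add, ENNReal.tsum_mul_left]
    _ ≤ e * (∑' u, μ₂ u * g u) + δ := add_le_add_right hX _

theorem dp_seq_composition {T U V : Type*} [Countable U] [Countable V]
    (Φ : T → T → Prop) (F : T → U → ℝ≥0∞) (G : T → U → V → ℝ≥0∞)
    (hFdist : ∀ t, ∑' u, F t u = 1) (hGdist : ∀ t u, ∑' v, G t u v = 1)
    (ε₁ ε₂ δ₁ δ₂ : ℝ) (hε₁ : 0 ≤ ε₁) (hε₂ : 0 ≤ ε₂) (hδ₁ : 0 ≤ δ₁) (hδ₂ : 0 ≤ δ₂)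
    (hF : ∀ t₁ t₂, Φ t₁ t₂ → ∀ E : Set U,
      Pr (F t₁) E ≤ ENNReal.ofReal (Real.exp ε₁) * Pr (F t₂) E + ENNReal.ofReal δ₁)
    (hG : ∀ u t₁ t₂, Φ t₁ t₂ → ∀ E : Set V,
      Pr (G t₁ u) E ≤ ENNReal.ofReal (Real.exp ε₂) * Pr (G t₂ u) E + ENNReal.ofReal δ₂) :
    ∀ t₁ t₂, Φ t₁ t₂ → ∀ E : Set V,
      Pr (dbind (F t₁) (G t₁)) E ≤
        ENNReal.ofReal (Real.exp (ε₁ + ε₂)) * Pr (dbind (F t₂) (G t₂)) E +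
          ENNReal.ofReal (δ₁ + δ₂) := by
  intro t₁ t₂ hΦ E
  set e₁ := ENNReal.ofReal (Real.exp ε₁) with he₁
  set e₂ := ENNReal.ofReal (Real.exp ε₂) with he₂
  set h₂ : U → ℝ≥0∞ := fun u => Pr (G t₂ u) E with hh₂
  set g : U → ℝ≥0∞ := fun u => min 1 (e₂ * h₂ u) with hgdef
  have hg1 : ∀ u, g u ≤ 1 := fun u => min_le_left _ _
  have hPrG1 : ∀ u, Pr (G t₁ u) E ≤ 1 := fun u => (hGdist t₁ u) ▸ Pr_le_tsum _ _
  have hgle : ∀ u, Pr (G t₁ u) E ≤ g u + ENNReal.ofReal δ₂ := by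
    intro u
    show Pr (G t₁ u) E ≤ min 1 (e₂ * h₂ u) + ENNReal.ofReal δ₂
    rw [← min_add_add_right]
    exact le_min (le_add_right (hPrG1 u)) (hG u t₁ t₂ hΦ E)
  have step1 : Pr (dbind (F t₁) (G t₁)) E
      ≤ (∑' u, F t₁ u * g u) + ENNReal.ofReal δ₂ := by
    rw [Pr_dbind]
    calc ∑' u, F t₁ u * Pr (G t₁ u) E
        ≤ ∑' u, F t₁ u * (g u + ENNReal.ofReal δ₂) :=
          ENNReal.tsum_le_tsum fun u => mul_le_mul_right (hgle u) _
      _ = (∑' u, F t₁ u * g u) + ENNReal.ofReal δ₂ * ∑' u, F t₁ u := by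
          rw [← ENNReal.tsum_mul_left, ← ENNReal.tsum_add]
          exact tsum_congr fun u => by ring
      _ = (∑' u, F t₁ u * g u) + ENNReal.ofReal δ₂ := by rw [hFdist t₁, mul_one]
  have step2 : (∑' u, F t₁ u * g u)
      ≤ e₁ * (∑' u, F t₂ u * g u) + ENNReal.ofReal δ₁ :=
    key_exp_dp (F t₁) (F t₂) (hFdist t₂) e₁ _ ENNReal.ofReal_ne_top
      (hF t₁ t₂ hΦ) g hg1
  have step3 : (∑' u, F t₂ u * g u) ≤ e₂ * Pr (dbind (F t₂) (G t₂)) E := by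
    rw [Pr_dbind, ← ENNReal.tsum_mul_left]
    refine ENNReal.tsum_le_tsum fun u => ?_
    calc F t₂ u * g u ≤ F t₂ u * (e₂ * h₂ u) :=
          mul_le_mul_right (min_le_right _ _) _
      _ = e₂ * (F t₂ u * Pr (G t₂ u) E) := by rw [hh₂]; ring
  have hee : e₁ * e₂ = ENNReal.ofReal (Real.exp (ε₁ + ε₂)) := by
    rw [he₁, he₂, ← ENNReal.ofReal_mul (Real.exp_nonneg _), ← Real.exp_add]
  calc Pr (dbind (F t₁) (G t₁)) E
      ≤ (∑' u, F t₁ u * g u) + ENNReal.ofReal δ₂ := step1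
    _ ≤ (e₁ * (∑' u, F t₂ u * g u) + ENNReal.ofReal δ₁) + ENNReal.ofReal δ₂ :=
        add_le_add_left step2 _
    _ ≤ (e₁ * (e₂ * Pr (dbind (F t₂) (G t₂)) E) + ENNReal.ofReal δ₁)
          + ENNReal.ofReal δ₂ := by
        gcongr
    _ = ENNReal.ofReal (Real.exp (ε₁ + ε₂)) * Pr (dbind (F t₂) (G t₂)) E
          + ENNReal.ofReal (δ₁ + δ₂) := by
        rw [← mul_assoc, hee, ENNReal.ofReal_add hδ₁ hδ₂, add_assoc]
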